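/- Let G ≤ GL(d, ℝ) be a connected linear semi-simple Lie group and let C_g : G → G be conjugation by an element g ∈ G with multiplicative Jordan decomposition g = e·h·u (e elliptic, h hyperbolic, u unipotent, pairwise commuting). Then the recurrent set of C_g equals G_h ∩ G_u, where G_h and G_u are the centralizers in G of h and u respectively (equivalently, the fixed point sets of C_h and of C_u in G). Moreover, C_g restricted to its recurrent set is an isometry for some distance. -/

import Mathlib

open Filter Set Topology Matrix

attribute [local instance 100] LieRing.ofAssociativeRing LieAlgebra.ofAssociativeAlgebra

/-- The *recurrent set* of a continuous map `f`: the set of points `x` that are limits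
of a subsequence `f^{n_k}(x)` with `n_k → ∞`. -/
def recurrentSet {X : Type*} [TopologicalSpace X] (f : X → X) : Set X :=
  {x | ∃ n : ℕ → ℕ, Filter.Tendsto n Filter.atTop Filter.atTop ∧
    Filter.Tendsto (fun k => f^[n k] x) Filter.atTop (nhds x)}

/-- An element of `GL(d, ℝ)` is *elliptic* when it is conjugate to an orthogonal matrix,
i.e. it is semisimple with all eigenvalues of modulus `1`. -/
def IsElliptic {d : ℕ} (e : Matrix.GeneralLinearGroup (Fin d) ℝ) : Prop :=
  ∃ p : Matrix.GeneralLinearGroup (Fin d) ℝ,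
    ((p * e * p⁻¹ : Matrix.GeneralLinearGroup (Fin d) ℝ) : Matrix (Fin d) (Fin d) ℝ) ∈
      Matrix.orthogonalGroup (Fin d) ℝ

/-- An element of `GL(d, ℝ)` is *hyperbolic* when it is conjugate to a diagonal matrix
with positive diagonal entries, i.e. it is semisimple with positive real eigenvalues. -/
def IsHyperbolic {d : ℕ} (h : Matrix.GeneralLinearGroup (Fin d) ℝ) : Prop :=
  ∃ (p : Matrix.GeneralLinearGroup (Fin d) ℝ) (v : Fin d → ℝ), (∀ i, 0 < v i) ∧
    ((p * h * p⁻¹ : Matrix.GeneralLinearGroup (Fin d) ℝ) : Matrix (Fin d) (Fin d) ℝ) =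
      Matrix.diagonal v

/-- An element of `GL(d, ℝ)` is *unipotent* when `(u - 1)^d = 0`. -/
def IsUnipotentGL {d : ℕ} (u : Matrix.GeneralLinearGroup (Fin d) ℝ) : Prop :=
  ((u : Matrix (Fin d) (Fin d) ℝ) - 1) ^ d = 0


section Helpers
open Polynomial



/-- conjugation iterate in a group -/
lemma conj_iterate {G : Type*} [Group G] (a x : G) (n : ℕ) :
    (fun y => a * y * a⁻¹)^[n] x = a ^ n * x * (a ^ n)⁻¹ := by
  induction n with
  | zero => simp
  | succ n ih =>
      rw [Function.iterate_succ_apply', ih]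
      group

/-- conjugate powers in a monoid -/
lemma my_conj_pow {R : Type*} [Monoid R] {p p' : R} (hp : p * p' = 1) (hp' : p' * p = 1)
    (a : R) (n : ℕ) : (p * a * p') ^ n = p * a ^ n * p' := by
  induction n with
  | zero => simpa using hp.symm
  | succ n ih =>
      rw [pow_succ, ih, pow_succ]
      calc p * a ^ n * p' * (p * a * p') = p * a ^ n * (p' * p) * a * p' := by
            simp [mul_assoc]
        _ = p * (a ^ n * a) * p' := by rw [hp']; simp [mul_assoc]

noncomputable def binPoly (a : ℕ) : Polynomial ℝ :=
  Polynomial.C ((a.factorial : ℝ)⁻¹) * descPochhammer ℝ a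

lemma binPoly_eval (a n : ℕ) : (binPoly a).eval (n : ℝ) = (n.choose a : ℝ) := by
  rw [binPoly, eval_mul, eval_C, descPochhammer_eval_eq_descFactorial,
    Nat.descFactorial_eq_factorial_mul_choose]
  have : (a.factorial : ℝ) ≠ 0 := Nat.cast_ne_zero.mpr a.factorial_ne_zero
  push_cast
  field_simp

lemma poly_subseq_const {q : Polynomial ℝ} {n : ℕ → ℕ} (hn : Tendsto n atTop atTop)
    {L : ℝ} (hq : Tendsto (fun k => q.eval ((n k : ℕ) : ℝ)) atTop (nhds L)) :
    ∀ x : ℝ, q.eval x = L := by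
  rcases le_or_gt q.degree 0 with hd | hd
  · have hC : q = Polynomial.C (q.coeff 0) := q.eq_C_of_degree_le_zero hd
    have h0 : q.coeff 0 = L := by
      refine tendsto_nhds_unique (a := q.coeff 0) ?_ hq
      have : ∀ k, q.eval ((n k : ℕ) : ℝ) = q.coeff 0 := fun k => by
        conv_lhs => rw [hC]
        rw [eval_C]
      simp only [this]
      exact tendsto_const_nhds
    intro x; rw [hC, eval_C, h0]
  · exfalso
    have habs : Tendsto (fun k => |q.eval ((n k : ℕ) : ℝ)|) atTop atTop :=
      (q.abs_tendsto_atTop hd).comp (tendsto_natCast_atTop_atTop.comp hn)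
    exact not_tendsto_atTop_of_tendsto_nhds (hq.abs) habs

lemma geom_poly_tendsto_zero {r : ℝ} (h0 : 0 < r) (h1 : r < 1) (q : Polynomial ℝ) :
    Tendsto (fun n : ℕ => r ^ n * q.eval (n : ℝ)) atTop (nhds 0) := by
  have habs : |r| < 1 := by rwa [abs_of_pos h0]
  have : ∀ n : ℕ, r ^ n * q.eval (n : ℝ) =
      ∑ i ∈ Finset.range (q.natDegree + 1), q.coeff i * ((n : ℝ) ^ i * r ^ n) := by
    intro n
    rw [eval_eq_sum_range, Finset.mul_sum]
    refine Finset.sum_congr rfl fun i _ => by ring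
  simp only [this]
  have : Tendsto (fun n : ℕ => ∑ i ∈ Finset.range (q.natDegree + 1),
      q.coeff i * ((n : ℝ) ^ i * r ^ n)) atTop (nhds (∑ i ∈ Finset.range (q.natDegree + 1),
      q.coeff i * 0)) := by
    refine tendsto_finset_sum _ fun i _ => ?_
    exact (tendsto_pow_const_mul_const_pow_of_abs_lt_one i habs).const_mul _
  simpa using this

lemma geom_big_subseq {r : ℝ} (hr : 1 < r) {q : Polynomial ℝ} {n : ℕ → ℕ}
    (hn : Tendsto n atTop atTop) {L : ℝ}
    (h : Tendsto (fun k => r ^ (n k) * q.eval ((n k : ℕ) : ℝ)) atTop (nhds L)) :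
    (∀ x : ℝ, q.eval x = 0) ∧ L = 0 := by
  have hr0 : 0 < r := lt_trans one_pos hr
  have hinv : |r⁻¹| < 1 := by
    rw [abs_of_pos (inv_pos.mpr hr0)]
    rw [inv_lt_one_iff₀]; right; exact hr
  have h2 : Tendsto (fun k => (r⁻¹) ^ (n k)) atTop (nhds 0) :=
    (tendsto_pow_atTop_nhds_zero_of_abs_lt_one hinv).comp hn
  have h3 : Tendsto (fun k => q.eval ((n k : ℕ) : ℝ)) atTop (nhds 0) := by
    have := h2.mul h
    simp only [zero_mul] at this
    convert this using 2 with k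
    field_simp
    rw [one_div, inv_pow, mul_assoc, inv_mul_cancel₀ (pow_ne_zero _ hr0.ne'), mul_one]
  have hq0 := poly_subseq_const hn h3
  refine ⟨hq0, ?_⟩
  have : Tendsto (fun k => r ^ (n k) * q.eval ((n k : ℕ) : ℝ)) atTop (nhds 0) := by
    have : ∀ k, r ^ (n k) * q.eval ((n k : ℕ) : ℝ) = 0 := fun k => by rw [hq0]; ring
    simp only [this]; exact tendsto_const_nhds
  exact tendsto_nhds_unique h this


section EntryPoly

variable {d : ℕ}

local notation "MM" => Matrix (Fin d) (Fin d) ℝ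

lemma natCast_mul_eq_smul (A : MM) (c : ℕ) : A * (c : MM) = (c : ℝ) • A := by
  have h1 : ((c : ℕ) : MM) = (c : ℝ) • (1 : MM) := by
    rw [← map_natCast (algebraMap ℝ MM) c, Algebra.algebraMap_eq_smul_one]
  rw [h1, mul_smul_comm, mul_one]

lemma pow_eq_zero_of_le' {A : MM} {a b : ℕ} (h : a ≤ b) (hA : A ^ a = 0) : A ^ b = 0 := by
  rw [← Nat.add_sub_cancel' h, pow_add, hA, zero_mul]

/-- binomial expansion of powers of a unipotent matrix, truncated at `d`. -/
lemma unip_pow_eq {W N : MM} (hWN : W = 1 + N) (hN : N ^ d = 0) (n : ℕ) :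
    W ^ n = ∑ a ∈ Finset.range d, ((n.choose a : ℝ)) • N ^ a := by
  have h1 : W ^ n = ∑ a ∈ Finset.range (n + 1), ((n.choose a : ℝ)) • N ^ a := by
    have := (Commute.one_right N).add_pow n
    rw [hWN, add_comm 1 N, this]
    refine Finset.sum_congr rfl fun a _ => ?_
    rw [one_pow, mul_one, natCast_mul_eq_smul]
  rw [h1]
  have key : ∀ m : ℕ, (n + 1 ≤ m) →
      (∑ a ∈ Finset.range m, ((n.choose a : ℝ)) • N ^ a)
        = ∑ a ∈ Finset.range (n + 1), ((n.choose a : ℝ)) • N ^ a := by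
    intro m hm
    refine (Finset.sum_subset (Finset.range_subset_range.mpr hm) ?_).symm
    intro a _ ha
    rw [Finset.mem_range, not_lt] at ha
    rw [Nat.choose_eq_zero_of_lt (by omega), Nat.cast_zero, zero_smul]
  have key2 : ∀ m : ℕ, (d ≤ m) →
      (∑ a ∈ Finset.range m, ((n.choose a : ℝ)) • N ^ a)
        = ∑ a ∈ Finset.range d, ((n.choose a : ℝ)) • N ^ a := by
    intro m hm
    refine (Finset.sum_subset (Finset.range_subset_range.mpr hm) ?_).symm
    intro a _ ha
    rw [Finset.mem_range, not_lt] at ha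
    rw [pow_eq_zero_of_le' ha hN, smul_zero]
  rw [← key (max (n+1) d) (le_max_left _ _), key2 (max (n+1) d) (le_max_right _ _)]

/-- entries of `W^n Z W'^n` for unipotent `W` are polynomials in `n`. -/
lemma entry_poly (W W' Z : MM) (hW : W * W' = 1) (hW' : W' * W = 1)
    (hN : (W - 1) ^ d = 0) (i j : Fin d) :
    ∃ q : Polynomial ℝ, ∀ n : ℕ, (W ^ n * Z * W' ^ n) i j = q.eval ((n : ℕ) : ℝ) := by
  set N : MM := W - 1 with hNdef
  set N' : MM := W' - 1 with hN'def
  have hcomm : W' * N = N * W' := by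
    simp only [hNdef, mul_sub, sub_mul, hW, hW', mul_one, one_mul]
  have hN'eq : N' = -(W' * N) := by
    simp only [hNdef, hN'def, mul_sub, hW', mul_one]
    abel
  have hN' : N' ^ d = 0 := by
    have hc : Commute W' N := hcomm
    rw [hN'eq, neg_pow, hc.mul_pow, pow_eq_zero_of_le' (le_refl d) hN, mul_zero, mul_zero]
  have hWeq : W = 1 + N := by rw [hNdef]; abel
  have hW'eq : W' = 1 + N' := by rw [hN'def]; abel
  refine ⟨∑ a ∈ Finset.range d, ∑ b ∈ Finset.range d,
    Polynomial.C ((N ^ a * Z * N' ^ b) i j) * (binPoly a * binPoly b), ?_⟩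
  intro n
  have expand : W ^ n * Z * W' ^ n =
      ∑ a ∈ Finset.range d, ∑ b ∈ Finset.range d,
        ((n.choose a : ℝ) * (n.choose b : ℝ)) • (N ^ a * Z * N' ^ b) := by
    rw [unip_pow_eq hWeq hN, unip_pow_eq hW'eq hN', Finset.mul_sum]
    refine Eq.trans (Finset.sum_congr rfl fun b _ => ?_) Finset.sum_comm
    rw [Finset.sum_mul, Finset.sum_mul]
    refine Finset.sum_congr rfl fun a _ => ?_
    simp only [smul_mul_assoc, mul_smul_comm, smul_smul]
    rw [mul_comm ((n.choose b : ℝ))]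
  rw [expand]
  rw [Matrix.sum_apply]
  rw [eval_finset_sum]
  refine Finset.sum_congr rfl fun a _ => ?_
  rw [Matrix.sum_apply, eval_finset_sum]
  refine Finset.sum_congr rfl fun b _ => ?_
  rw [Matrix.smul_apply, eval_mul, eval_mul, eval_C, binPoly_eval, binPoly_eval, smul_eq_mul]
  ring

end EntryPoly


section MatrixHelpers
variable {d : ℕ}
local notation "MM" => Matrix (Fin d) (Fin d) ℝ
local notation "GL" => Matrix.GeneralLinearGroup (Fin d) ℝ





lemma star_apply' (A : MM) (i j : Fin d) : (star A) i j = A j i := by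
  rw [Matrix.star_eq_conjTranspose, Matrix.conjTranspose_apply, star_trivial]

lemma orth_isCompact : IsCompact {A : MM | A ∈ Matrix.orthogonalGroup (Fin d) ℝ} := by
  have hsub : {A : MM | A ∈ Matrix.orthogonalGroup (Fin d) ℝ} ⊆
      {A : MM | ∀ i j, A i j ∈ Set.Icc (-1 : ℝ) 1} := by
    intro A hA i j
    have h1 : (star A * A) j j = 1 := by
      rw [show star A * A = 1 from (Matrix.mem_orthogonalGroup_iff' (Fin d) ℝ).mp hA, Matrix.one_apply_eq]
    have h2 : ∑ k, A k j * A k j = 1 := by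
      rw [← h1, Matrix.mul_apply]
      exact Finset.sum_congr rfl fun k _ => by rw [star_apply']
    have h3 : A i j * A i j ≤ 1 := by
      rw [← h2]
      exact Finset.single_le_sum (f := fun k => A k j * A k j)
        (fun k _ => mul_self_nonneg _) (Finset.mem_univ i)
    constructor
    · nlinarith [mul_self_nonneg (A i j + 1)]
    · nlinarith [mul_self_nonneg (A i j - 1)]
  have hIcc : IsCompact {A : MM | ∀ i j, A i j ∈ Set.Icc (-1 : ℝ) 1} := by
    have : {A : MM | ∀ i j, A i j ∈ Set.Icc (-1 : ℝ) 1} =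
        Set.univ.pi fun _ : Fin d => Set.univ.pi fun _ : Fin d => Set.Icc (-1 : ℝ) 1 := by
      ext A
      simp only [Set.mem_setOf_eq, Set.mem_univ_pi]
      exact ⟨fun hA i _ j _ => hA i j, fun hA i j => hA i (Set.mem_univ i) j (Set.mem_univ j)⟩
    rw [this]
    exact isCompact_univ_pi fun i => isCompact_univ_pi fun j => isCompact_Icc
  have hclosed : IsClosed {A : MM | A ∈ Matrix.orthogonalGroup (Fin d) ℝ} := by
    have : {A : MM | A ∈ Matrix.orthogonalGroup (Fin d) ℝ} =
        ((fun A : MM => star A * A) ⁻¹' {1}) ∩ ((fun A : MM => A * star A) ⁻¹' {1}) := by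
      ext A
      simp only [Set.mem_setOf_eq, Set.mem_inter_iff, Set.mem_preimage, Set.mem_singleton_iff]
      rw [Unitary.mem_iff]
    rw [this]
    have hc1 : Continuous fun A : MM => star A * A :=
      ((continuous_id.matrix_conjTranspose).mul continuous_id)
    have hc2 : Continuous fun A : MM => A * star A :=
      (continuous_id.mul (continuous_id.matrix_conjTranspose))
    exact ((isClosed_singleton.preimage hc1).inter (isClosed_singleton.preimage hc2))
  exact hIcc.of_isClosed_subset hclosed hsub

lemma sq_sum_eq_trace (A : MM) : ∑ j, ∑ i, (A i j) ^ 2 = Matrix.trace (star A * A) := by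
  rw [Matrix.trace]
  refine Finset.sum_congr rfl fun j _ => ?_
  rw [Matrix.diag_apply, Matrix.mul_apply]
  refine Finset.sum_congr rfl fun i _ => ?_
  rw [star_apply', sq]

lemma sq_sum_conj_orth {O : MM} (hO : O ∈ Matrix.orthogonalGroup (Fin d) ℝ) (C : MM) :
    ∑ j, ∑ i, ((O * C * star O) i j) ^ 2 = ∑ j, ∑ i, (C i j) ^ 2 := by
  rw [sq_sum_eq_trace, sq_sum_eq_trace]
  have h1 : star O * O = 1 := (Matrix.mem_orthogonalGroup_iff' (Fin d) ℝ).mp hO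
  have h2 : O * star O = 1 := (Matrix.mem_orthogonalGroup_iff (Fin d) ℝ).mp hO
  have : star (O * C * star O) * (O * C * star O) = O * (star C * C) * star O := by
    rw [Matrix.star_mul, Matrix.star_mul, star_star]
    calc (star (star O)) * (star C * star O) * (O * C * star O)
        = O * (star C * ((star O * O) * (C * star O))) := by
          rw [star_star]; simp only [mul_assoc]
      _ = O * (star C * C) * star O := by rw [h1, one_mul]; simp only [mul_assoc]
  rw [this, Matrix.trace_mul_cycle, ← mul_assoc, h1, one_mul]







lemma continuous_val_GL : Continuous (fun x : GL => (x : MM)) := Units.continuous_val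

/-- from a tendsto in a subgroup obtain tendsto of matrix entries -/
lemma tendsto_mat_of_tendsto_sub {S : Subgroup GL} {z : ℕ → ↥S} {l : ↥S}
    (hz : Tendsto z atTop (nhds l)) :
    Tendsto (fun k => ((z k : GL) : MM)) atTop (nhds ((l : GL) : MM)) :=
  (continuous_val_GL.comp continuous_subtype_val).continuousAt.tendsto.comp hz

/-- build tendsto in a subgroup of GL from matrix-level tendsto of values and inverses -/
lemma tendsto_sub_of_tendsto_mat {S : Subgroup GL} {z : ℕ → ↥S} {l : ↥S}
    (h1 : Tendsto (fun k => ((z k : GL) : MM)) atTop (nhds ((l : GL) : MM)))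
    (h2 : Tendsto (fun k => ((((z k)⁻¹ : ↥S) : GL) : MM)) atTop
      (nhds (((l⁻¹ : ↥S) : GL) : MM))) :
    Tendsto z atTop (nhds l) := by
  rw [tendsto_subtype_rng]
  rw [Units.isInducing_embedProduct.tendsto_nhds_iff]
  have key : ∀ x : ↥S, Units.embedProduct MM ((x : GL)) =
      (((x : GL) : MM), MulOpposite.op ((((x⁻¹ : ↥S) : GL)) : MM)) := by
    intro x
    simp only [Units.embedProduct_apply]
    congr 1
  simp only [Function.comp_def, key]
  exact (h1.prodMk_nhds ((MulOpposite.continuous_op.tendsto _).comp h2))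

lemma strictMono_gap {ψ : ℕ → ℕ} (hψ : StrictMono ψ) : ∀ a c : ℕ, ψ a + c ≤ ψ (a + c) := by
  intro a c
  induction c with
  | zero => simp
  | succ c ih =>
      have h1 : ψ (a + c) < ψ (a + c + 1) := hψ (Nat.lt_succ_self _)
      show ψ a + (c + 1) ≤ ψ (a + c + 1)
      omega


/-- inverse of an orthogonal unit is its star, at the matrix level -/
lemma val_inv_eq_star {o : GL} (ho : (o : MM) ∈ Matrix.orthogonalGroup (Fin d) ℝ) :
    ((o⁻¹ : GL) : MM) = star (o : MM) := by
  have h2 : (o : MM) * star (o : MM) = 1 := (Matrix.mem_orthogonalGroup_iff (Fin d) ℝ).mp ho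
  have h3 : ((o⁻¹ : GL) : MM) * (o : MM) = 1 := by
    rw [← Units.val_mul, inv_mul_cancel, Units.val_one]
  calc ((o⁻¹ : GL) : MM) = ((o⁻¹ : GL) : MM) * ((o : MM) * star (o : MM)) := by
        rw [h2, mul_one]
    _ = (((o⁻¹ : GL) : MM) * (o : MM)) * star (o : MM) := by rw [mul_assoc]
    _ = star (o : MM) := by rw [h3, one_mul]

theorem aux_subset
    (S : Subgroup GL) (g e h u : GL) (hg : g ∈ S)
    (p₁ : GL) (hp₁ : ((p₁ * e * p₁⁻¹ : GL) : MM) ∈ Matrix.orthogonalGroup (Fin d) ℝ)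
    (p₂ : GL) (v : Fin d → ℝ) (hv : ∀ i, 0 < v i)
    (hp₂ : ((p₂ * h * p₂⁻¹ : GL) : MM) = Matrix.diagonal v)
    (hu : ((u : MM) - 1) ^ d = 0)
    (hdecomp : g = e * h * u)
    (ceh : Commute e h) (ceu : Commute e u) (chu : Commute h u)
    (x : ↥S)
    (hx : x ∈ recurrentSet (fun y : ↥S => (⟨g, hg⟩ : ↥S) * y * (⟨g, hg⟩ : ↥S)⁻¹)) :
    Commute (x : GL) h ∧ Commute (x : GL) u := by
  haveI : FirstCountableTopology MM :=
    inferInstanceAs (FirstCountableTopology (Fin d → Fin d → ℝ))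
  obtain ⟨n, hn, hlim⟩ := hx
  -- matrix values
  set Xm : MM := ((x : GL) : MM) with hXm_def
  set Q1 : MM := ((p₁ : GL) : MM) with hQ1_def
  set Q1' : MM := ((p₁⁻¹ : GL) : MM) with hQ1'_def
  have hQ : Q1 * Q1' = 1 := by rw [hQ1_def, hQ1'_def, ← Units.val_mul, mul_inv_cancel, Units.val_one]
  have hQ' : Q1' * Q1 = 1 := by rw [hQ1_def, hQ1'_def, ← Units.val_mul, inv_mul_cancel, Units.val_one]
  set O_gl : GL := p₁ * e * p₁⁻¹ with hOgl_def
  set O : MM := ((O_gl : GL) : MM) with hO_def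
  have hOmem : O ∈ Matrix.orthogonalGroup (Fin d) ℝ := hp₁
  set P : MM := ((p₂ : GL) : MM) with hP_def
  set P' : MM := ((p₂⁻¹ : GL) : MM) with hP'_def
  have hP : P * P' = 1 := by rw [hP_def, hP'_def, ← Units.val_mul, mul_inv_cancel, Units.val_one]
  have hP' : P' * P = 1 := by rw [hP_def, hP'_def, ← Units.val_mul, inv_mul_cancel, Units.val_one]
  set E : MM := ((e : GL) : MM) with hE_def
  set E' : MM := ((e⁻¹ : GL) : MM) with hE'_def
  set Hm : MM := ((h : GL) : MM) with hHm_def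
  set Um : MM := ((u : GL) : MM) with hUm_def
  set A_gl : GL := h * u with hAgl_def
  set A : MM := ((A_gl : GL) : MM) with hA_def
  set A' : MM := ((A_gl⁻¹ : GL) : MM) with hA'_def
  set D : MM := Matrix.diagonal v with hD_def
  set hd_gl : GL := p₂ * h * p₂⁻¹ with hhd_def
  set w_gl : GL := p₂ * u * p₂⁻¹ with hw_def
  set W : MM := ((w_gl : GL) : MM) with hW_def
  set W' : MM := ((w_gl⁻¹ : GL) : MM) with hW'_def
  set D' : MM := ((hd_gl⁻¹ : GL) : MM) with hD'_def
  have hDval : ((hd_gl : GL) : MM) = D := hp₂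
  have hWW' : W * W' = 1 := by rw [hW_def, hW'_def, ← Units.val_mul, mul_inv_cancel, Units.val_one]
  have hW'W : W' * W = 1 := by rw [hW_def, hW'_def, ← Units.val_mul, inv_mul_cancel, Units.val_one]
  have hDD' : D * D' = 1 := by
    rw [← hDval, hD'_def, ← Units.val_mul, mul_inv_cancel, Units.val_one]
  have hD'D : D' * D = 1 := by
    rw [← hDval, hD'_def, ← Units.val_mul, inv_mul_cancel, Units.val_one]
  -- the unipotent conjugate is unipotent
  have hWu : (W - 1) ^ d = 0 := by
    have h1 : W = P * Um * P' := by
      rw [hW_def, hw_def, Units.val_mul, Units.val_mul, hP_def, hP'_def, hUm_def]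
    have h2 : W - 1 = P * (Um - 1) * P' := by
      rw [h1, mul_sub, sub_mul, mul_one, hP]
    rw [h2, my_conj_pow hP hP', hu, mul_zero, zero_mul]
  -- entries of D-powers
  have hD'diag : D' = Matrix.diagonal (fun i => (v i)⁻¹) := by
    have h1 : Matrix.diagonal (fun i => (v i)⁻¹) * D = 1 := by
      rw [hD_def, Matrix.diagonal_mul_diagonal]
      have : (fun i => (v i)⁻¹ * v i) = fun _ : Fin d => (1 : ℝ) :=
        funext fun i => inv_mul_cancel₀ (hv i).ne'
      rw [this, Matrix.diagonal_one]
    calc D' = 1 * D' := (one_mul _).symm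
      _ = Matrix.diagonal (fun i => (v i)⁻¹) * (D * D') := by rw [← h1, mul_assoc]
      _ = Matrix.diagonal (fun i => (v i)⁻¹) := by rw [hDD', mul_one]
  -- E in terms of O
  have hQEQ : Q1 * E * Q1' = O := by
    rw [hO_def, hOgl_def, Units.val_mul, Units.val_mul, hQ1_def, hQ1'_def, hE_def]
  have hEO : E = Q1' * O * Q1 := by
    rw [← hQEQ]
    refine Eq.symm ?_
    calc Q1' * (Q1 * E * Q1') * Q1 = Q1' * Q1 * E * (Q1' * Q1) := by
          simp only [mul_assoc]
      _ = E := by rw [hQ', one_mul, mul_one]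
  have hstarO : star O = ((O_gl⁻¹ : GL) : MM) := (val_inv_eq_star hOmem).symm
  have hE'O : E' = Q1' * star O * Q1 := by
    rw [hstarO, hE'_def]
    have : e⁻¹ = p₁⁻¹ * O_gl⁻¹ * p₁ := by rw [hOgl_def]; group
    rw [this, Units.val_mul, Units.val_mul, hQ1_def, hQ1'_def]
  -- powers of e
  have hEpow : ∀ k : ℕ, E ^ k = Q1' * O ^ k * Q1 := fun k => by
    rw [hEO, my_conj_pow hQ' hQ]
  have hE'pow : ∀ k : ℕ, E' ^ k = Q1' * star (O ^ k) * Q1 := fun k => by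
    have hOk : (O ^ k) = ((O_gl ^ k : GL) : MM) := by rw [Units.val_pow_eq_pow_val]
    have hOkmem : ((O_gl ^ k : GL) : MM) ∈ Matrix.orthogonalGroup (Fin d) ℝ := by
      rw [← hOk]; exact pow_mem hOmem k
    have : star (O ^ k) = (((O_gl ^ k)⁻¹ : GL) : MM) := by
      rw [hOk, val_inv_eq_star hOkmem]
    rw [hE'O, my_conj_pow hQ' hQ, this]
    congr 2
    rw [hstarO]
    rw [← Units.val_pow_eq_pow_val, ← inv_pow]
  -- group identities for powers of g
  have hcE_A : Commute e A_gl := ceh.mul_right ceu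
  have hgpow : ∀ k : ℕ, g ^ k = e ^ k * A_gl ^ k := fun k => by
    rw [hdecomp, mul_assoc, ← hAgl_def, hcE_A.mul_pow]
  have hginvpow : ∀ k : ℕ, (g⁻¹) ^ k = (A_gl⁻¹) ^ k * (e⁻¹) ^ k := fun k => by
    have h1 : g⁻¹ = A_gl⁻¹ * e⁻¹ := by rw [hdecomp, mul_assoc, ← hAgl_def, _root_.mul_inv_rev]
    have h2 : Commute (A_gl⁻¹) (e⁻¹) := (hcE_A.symm.inv_inv)
    rw [h1, h2.mul_pow]
  -- the recurrent sequence at matrix level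
  set B : ℕ → MM := fun k => A ^ k * Xm * A' ^ k with hB_def
  have hval_iter : ∀ k : ℕ,
      ((((fun y : ↥S => (⟨g, hg⟩ : ↥S) * y * (⟨g, hg⟩ : ↥S)⁻¹)^[k] x : ↥S) : GL) : MM)
        = E ^ k * B k * E' ^ k := by
    intro k
    rw [conj_iterate]
    have h1 : (((⟨g, hg⟩ : ↥S) ^ k * x * ((⟨g, hg⟩ : ↥S) ^ k)⁻¹ : ↥S) : GL)
        = g ^ k * (x : GL) * (g ^ k)⁻¹ := by
      push_cast
      rfl
    rw [h1]
    rw [show (g ^ k)⁻¹ = (g⁻¹) ^ k from (inv_pow g k).symm, hginvpow k, hgpow k]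
    rw [Units.val_mul, Units.val_mul, Units.val_mul, Units.val_mul]
    simp only [Units.val_pow_eq_pow_val]
    rw [hB_def]
    simp only [← hXm_def, ← hE_def, ← hE'_def, ← hA_def, ← hA'_def]
    simp only [mul_assoc]
  have hmat : Tendsto (fun k => E ^ (n k) * B (n k) * E' ^ (n k)) atTop (nhds Xm) := by
    have := tendsto_mat_of_tendsto_sub hlim
    simp only [hval_iter] at this
    exact this
  -- extract a subsequence along which O^{n k} converges
  obtain ⟨O₀, hO₀mem, φ, hφ, hOconv⟩ :=
    orth_isCompact.tendsto_subseq (x := fun k => O ^ (n k)) (fun k => pow_mem hOmem (n k))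
  set m : ℕ → ℕ := fun k => n (φ k) with hm_def
  have hm : Tendsto m atTop atTop := hn.comp hφ.tendsto_atTop
  have hOm : Tendsto (fun k => O ^ (m k)) atTop (nhds O₀) := hOconv
  have hcstar : Continuous (fun Mt : MM => star Mt) := by
    have : Continuous fun Mt : MM => Mt.conjTranspose := continuous_id.matrix_conjTranspose
    exact this
  have hOs : Tendsto (fun k => star (O ^ (m k))) atTop (nhds (star O₀)) :=
    (hcstar.tendsto _).comp hOm
  set E₀ : MM := Q1' * O₀ * Q1 with hE₀_def
  set E₀' : MM := Q1' * star O₀ * Q1 with hE₀'_def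
  have hO₀s : star O₀ * O₀ = 1 := (Matrix.mem_orthogonalGroup_iff' (Fin d) ℝ).mp hO₀mem
  have hO₀s' : O₀ * star O₀ = 1 := (Matrix.mem_orthogonalGroup_iff (Fin d) ℝ).mp hO₀mem
  have hE₀E₀' : E₀ * E₀' = 1 := by
    rw [hE₀_def, hE₀'_def]
    calc Q1' * O₀ * Q1 * (Q1' * star O₀ * Q1)
        = Q1' * (O₀ * ((Q1 * Q1') * (star O₀ * Q1))) := by simp only [mul_assoc]
      _ = Q1' * Q1 := by rw [hQ, one_mul, ← mul_assoc O₀ (star O₀) Q1, hO₀s', one_mul]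
      _ = 1 := hQ'
  have hE₀'E₀ : E₀' * E₀ = 1 := by
    rw [hE₀_def, hE₀'_def]
    calc Q1' * star O₀ * Q1 * (Q1' * O₀ * Q1)
        = Q1' * (star O₀ * ((Q1 * Q1') * (O₀ * Q1))) := by simp only [mul_assoc]
      _ = Q1' * Q1 := by rw [hQ, one_mul, ← mul_assoc (star O₀) O₀ Q1, hO₀s, one_mul]
      _ = 1 := hQ'
  -- powers of E converge along the subsequence
  have hEconv : Tendsto (fun k => E ^ (m k)) atTop (nhds E₀) := by
    simp only [hEpow]
    rw [hE₀_def]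
    exact ((hOm.const_mul Q1').mul_const Q1)
  have hE'conv : Tendsto (fun k => E' ^ (m k)) atTop (nhds E₀') := by
    simp only [hE'pow]
    rw [hE₀'_def]
    exact ((hOs.const_mul Q1').mul_const Q1)
  -- B along the subsequence converges to Y0
  set Y0 : MM := E₀' * Xm * E₀ with hY0_def
  have hEE' : ∀ k : ℕ, E ^ k * E' ^ k = 1 := fun k => by
    rw [hEpow, hE'pow]
    have hOk : (O ^ k) = ((O_gl ^ k : GL) : MM) := by rw [Units.val_pow_eq_pow_val]
    have hOkmem : O ^ k ∈ Matrix.orthogonalGroup (Fin d) ℝ := pow_mem hOmem k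
    have h1 : O ^ k * star (O ^ k) = 1 := (Matrix.mem_orthogonalGroup_iff (Fin d) ℝ).mp hOkmem
    calc Q1' * O ^ k * Q1 * (Q1' * star (O ^ k) * Q1)
        = Q1' * (O ^ k * ((Q1 * Q1') * (star (O ^ k) * Q1))) := by simp only [mul_assoc]
      _ = Q1' * Q1 := by rw [hQ, one_mul, ← mul_assoc _ _ Q1, h1, one_mul]
      _ = 1 := hQ'
  have hE'E : ∀ k : ℕ, E' ^ k * E ^ k = 1 := fun k => by
    rw [hEpow, hE'pow]
    have hOkmem : O ^ k ∈ Matrix.orthogonalGroup (Fin d) ℝ := pow_mem hOmem k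
    have h1 : star (O ^ k) * O ^ k = 1 := (Matrix.mem_orthogonalGroup_iff' (Fin d) ℝ).mp hOkmem
    calc Q1' * star (O ^ k) * Q1 * (Q1' * O ^ k * Q1)
        = Q1' * (star (O ^ k) * ((Q1 * Q1') * (O ^ k * Q1))) := by simp only [mul_assoc]
      _ = Q1' * Q1 := by rw [hQ, one_mul, ← mul_assoc _ _ Q1, h1, one_mul]
      _ = 1 := hQ'
  have hBsub : Tendsto (fun k => B (m k)) atTop (nhds Y0) := by
    have hident : ∀ k : ℕ, B k = E' ^ k * (E ^ k * B k * E' ^ k) * E ^ k := fun k => by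
      calc B k = (E' ^ k * E ^ k) * B k * (E' ^ k * E ^ k) := by
            rw [hE'E]; rw [one_mul, mul_one]
        _ = E' ^ k * (E ^ k * B k * E' ^ k) * E ^ k := by simp only [mul_assoc]
    have h2 : Tendsto (fun k => E' ^ (m k) * (E ^ (m k) * B (m k) * E' ^ (m k)) * E ^ (m k))
        atTop (nhds (E₀' * Xm * E₀)) :=
      ((hE'conv.mul (hmat.comp hφ.tendsto_atTop)).mul hEconv)
    rw [hY0_def]
    have h3 : (fun k => B (m k))
        = fun k => E' ^ (m k) * (E ^ (m k) * B (m k) * E' ^ (m k)) * E ^ (m k) := by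
      funext k
      exact hident (m k)
    rw [h3]
    exact h2
  -- collapse helpers
  have cP : ∀ T : MM, P' * (P * T) = T := fun T => by rw [← mul_assoc, hP', one_mul]
  have cP' : ∀ T : MM, P * (P' * T) = T := fun T => by rw [← mul_assoc, hP, one_mul]
  have hmulP : ∀ T T' : MM, (P' * T * P) * (P' * T' * P) = P' * (T * T') * P := by
    intro T T'
    calc (P' * T * P) * (P' * T' * P) = P' * (T * (P * (P' * (T' * P)))) := by
          simp only [mul_assoc]
      _ = P' * (T * T') * P := by rw [cP']; simp only [mul_assoc]
  -- conjugation of B by P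
  set Z : MM := P * Xm * P' with hZ_def
  have hcDW : Commute hd_gl w_gl := by
    have h1 : hd_gl * w_gl = p₂ * (h * u) * p₂⁻¹ := by rw [hhd_def, hw_def]; group
    have h2 : w_gl * hd_gl = p₂ * (u * h) * p₂⁻¹ := by rw [hhd_def, hw_def]; group
    have : hd_gl * w_gl = w_gl * hd_gl := by rw [h1, h2, chu.eq]
    exact this
  have hPA : P * A * P' = D * W := by
    have h1 : p₂ * A_gl * p₂⁻¹ = hd_gl * w_gl := by rw [hAgl_def, hhd_def, hw_def]; group
    have h2 := congrArg (fun z : GL => ((z : GL) : MM)) h1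
    simp only [Units.val_mul] at h2
    rw [hP_def, hP'_def, hA_def, ← hDval, hW_def]
    exact h2
  have hPA' : P * A' * P' = W' * D' := by
    have h1 : p₂ * A_gl⁻¹ * p₂⁻¹ = w_gl⁻¹ * hd_gl⁻¹ := by rw [hAgl_def, hhd_def, hw_def]; group
    have h2 := congrArg (fun z : GL => ((z : GL) : MM)) h1
    simp only [Units.val_mul] at h2
    rw [hP_def, hP'_def, hA'_def, hD'_def, hW'_def]
    exact h2
  have hcDWm : Commute D W := by
    have h2 := congrArg (fun z : GL => ((z : GL) : MM)) hcDW.eq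
    simp only [Units.val_mul] at h2
    have : D * W = W * D := by rw [← hDval, hW_def]; exact h2
    exact this
  have hcW'D' : Commute W' D' := by
    have h1 : Commute w_gl⁻¹ hd_gl⁻¹ := hcDW.symm.inv_inv
    have h2 := congrArg (fun z : GL => ((z : GL) : MM)) h1.eq
    simp only [Units.val_mul] at h2
    have : W' * D' = D' * W' := by rw [hW'_def, hD'_def]; exact h2
    exact this
  have hBconj : ∀ k : ℕ, P * B k * P' = D ^ k * (W ^ k * Z * W' ^ k) * D' ^ k := by
    intro k
    have e1 : P * A ^ k * P' = D ^ k * W ^ k := by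
      calc P * A ^ k * P' = (P * A * P') ^ k := (my_conj_pow hP hP' A k).symm
        _ = (D * W) ^ k := by rw [hPA]
        _ = D ^ k * W ^ k := hcDWm.mul_pow k
    have e2 : P * A' ^ k * P' = W' ^ k * D' ^ k := by
      calc P * A' ^ k * P' = (P * A' * P') ^ k := (my_conj_pow hP hP' A' k).symm
        _ = (W' * D') ^ k := by rw [hPA']
        _ = W' ^ k * D' ^ k := hcW'D'.mul_pow k
    have e3 : (P * A ^ k * P') * (P * Xm * P') * (P * A' ^ k * P') = P * B k * P' := by
      show _ = P * (A ^ k * Xm * A' ^ k) * P'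
      calc (P * A ^ k * P') * (P * Xm * P') * (P * A' ^ k * P')
          = P * (A ^ k * (P' * (P * (Xm * (P' * (P * (A' ^ k * P'))))))) := by
            simp only [mul_assoc]
        _ = P * (A ^ k * (Xm * (A' ^ k * P'))) := by rw [cP, cP]
        _ = P * (A ^ k * Xm * A' ^ k) * P' := by simp only [mul_assoc]
    rw [← e3, e1, e2, ← hZ_def]
    simp only [mul_assoc]
  set Y0' : MM := P * Y0 * P' with hY0'_def
  have hY0'sub : Tendsto (fun k => P * B (m k) * P') atTop (nhds Y0') := by
    rw [hY0'_def]
    exact (hBsub.const_mul P).mul_const P'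
  have hEntry : ∀ (k : ℕ) (i j : Fin d),
      (P * B k * P') i j = (v i / v j) ^ k * ((W ^ k * Z * W' ^ k) i j) := by
    intro k i j
    rw [hBconj k]
    have hDk : D ^ k = Matrix.diagonal (fun i => (v i) ^ k) := by
      rw [hD_def, Matrix.diagonal_pow]
      rfl
    have hD'k : D' ^ k = Matrix.diagonal (fun i => ((v i)⁻¹) ^ k) := by
      rw [hD'diag, Matrix.diagonal_pow]
      rfl
    rw [hDk, hD'k, Matrix.mul_diagonal, Matrix.diagonal_mul]
    rw [div_pow, div_eq_mul_inv, ← inv_pow]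
    ring
  have hfact : ∀ i j : Fin d,
      Tendsto (fun k => (P * B k * P') i j) atTop (nhds (Y0' i j)) ∧
        (v i ≠ v j → Y0' i j = 0) := by
    intro i j
    obtain ⟨q, hq⟩ := entry_poly W W' Z hWW' hW'W hWu i j
    have hr0 : 0 < v i / v j := div_pos (hv i) (hv j)
    have hsubt : Tendsto (fun k => (v i / v j) ^ (m k) * q.eval ((m k : ℕ) : ℝ)) atTop
        (nhds (Y0' i j)) := by
      have centry : Continuous fun A : MM => A i j :=
        Continuous.matrix_elem (continuous_id : Continuous fun A : MM => A) i j
      have h1 : Tendsto (fun k => (P * B (m k) * P') i j) atTop (nhds (Y0' i j)) :=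
        (centry.tendsto Y0').comp hY0'sub
      simp only [hEntry, hq] at h1
      exact h1
    rcases lt_trichotomy (v i / v j) 1 with hlt | heq | hgt
    · have hfull0 : Tendsto (fun k : ℕ => (v i / v j) ^ k * q.eval (k : ℝ)) atTop (nhds 0) :=
        geom_poly_tendsto_zero hr0 hlt q
      have hY00 : Y0' i j = 0 := tendsto_nhds_unique hsubt (hfull0.comp hm)
      constructor
      · have hh1 : Tendsto (fun k => (P * B k * P') i j) atTop (nhds 0) := by
          simp only [hEntry, hq]
          exact hfull0
        rw [hY00]
        exact hh1
      · intro _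
        exact hY00
    · have hvij : v i = v j := by
        rw [div_eq_one_iff_eq (hv j).ne'] at heq
        exact heq
      have hsub1 : Tendsto (fun k => q.eval ((m k : ℕ) : ℝ)) atTop (nhds (Y0' i j)) := by
        simp only [heq, one_pow, one_mul] at hsubt
        exact hsubt
      have hconst := poly_subseq_const hm hsub1
      constructor
      · simp only [hEntry, hq, heq, one_pow, one_mul, hconst]
        exact tendsto_const_nhds
      · intro hne
        exact absurd hvij hne
    · obtain ⟨hq0, hL⟩ := geom_big_subseq hgt hm hsubt
      constructor
      · simp only [hEntry, hq, hq0, mul_zero]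
        rw [hL]
        exact tendsto_const_nhds
      · intro _
        exact hL
  have hfull : Tendsto (fun k => P * B k * P') atTop (nhds Y0') := by
    apply tendsto_pi_nhds.mpr
    intro i
    apply tendsto_pi_nhds.mpr
    intro j
    exact (hfact i j).1
  have hY0Y0' : P' * Y0' * P = Y0 := by
    rw [hY0'_def]
    calc P' * (P * Y0 * P') * P = (P' * P) * Y0 * (P' * P) := by simp only [mul_assoc]
      _ = Y0 := by rw [hP', one_mul, mul_one]
  have hBfull : Tendsto B atTop (nhds Y0) := by
    have h1 : Tendsto (fun k => P' * (P * B k * P') * P) atTop (nhds (P' * Y0' * P)) :=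
      (hfull.const_mul P').mul_const P
    have h2 : ∀ k, P' * (P * B k * P') * P = B k := fun k => by
      calc P' * (P * B k * P') * P = (P' * P) * B k * (P' * P) := by simp only [mul_assoc]
        _ = B k := by rw [hP', one_mul, mul_one]
    simp only [h2, hY0Y0'] at h1
    exact h1
  have hshift : A * Y0 * A' = Y0 := by
    have h1 : Tendsto (fun k : ℕ => B (k + 1)) atTop (nhds Y0) :=
      hBfull.comp (tendsto_add_atTop_nat 1)
    have h2 : ∀ k : ℕ, B (k + 1) = A * B k * A' := fun k => by
      show A ^ (k + 1) * Xm * A' ^ (k + 1) = A * (A ^ k * Xm * A' ^ k) * A'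
      rw [pow_succ' A k, pow_succ A' k]
      simp only [mul_assoc]
    have h3 : Tendsto (fun k : ℕ => A * B k * A') atTop (nhds (A * Y0 * A')) :=
      (hBfull.const_mul A).mul_const A'
    have h4 : Tendsto (fun k : ℕ => A * B k * A') atTop (nhds Y0) := by
      simp only [← h2]
      exact h1
    exact tendsto_nhds_unique h3 h4
  have hDYD' : D * Y0' * D' = Y0' := by
    rw [hD'diag, hD_def]
    ext i j
    rw [Matrix.mul_diagonal, Matrix.diagonal_mul]
    rcases eq_or_ne (v i) (v j) with hvij | hvij
    · rw [hvij, mul_comm (v j) (Y0' i j), mul_assoc, mul_inv_cancel₀ (hv j).ne', mul_one]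
    · rw [(hfact i j).2 hvij]
      ring
  have hD'YD : D' * Y0' * D = Y0' := by
    rw [hD'diag, hD_def]
    ext i j
    rw [Matrix.mul_diagonal, Matrix.diagonal_mul]
    rcases eq_or_ne (v i) (v j) with hvij | hvij
    · rw [hvij, mul_comm ((v j)⁻¹) (Y0' i j), mul_assoc, inv_mul_cancel₀ (hv j).ne', mul_one]
    · rw [(hfact i j).2 hvij]
      ring
  have cD : ∀ T : MM, D' * (D * T) = T := fun T => by rw [← mul_assoc, hD'D, one_mul]

  have hmulP2 : ∀ T T' : MM, (P * T * P') * (P * T' * P') = P * (T * T') * P' := by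
    intro T T'
    calc (P * T * P') * (P * T' * P') = P * (T * (P' * (P * (T' * P')))) := by
          simp only [mul_assoc]
      _ = P * (T * T') * P' := by rw [cP]; simp only [mul_assoc]
  have hDWY : (D * W) * Y0' * (W' * D') = Y0' := by
    calc (D * W) * Y0' * (W' * D')
        = (P * A * P') * (P * Y0 * P') * (P * A' * P') := by rw [hPA, hPA', ← hY0'_def]
      _ = (P * (A * Y0) * P') * (P * A' * P') := by rw [hmulP2]
      _ = P * ((A * Y0) * A') * P' := by rw [hmulP2]
      _ = P * Y0 * P' := by rw [mul_assoc A Y0 A', ← mul_assoc A Y0 A', hshift]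
      _ = Y0' := hY0'_def.symm
  have hWY : W * Y0' * W' = Y0' := by
    have h2 : D' * (((D * W) * Y0' * (W' * D')) * D) = W * (Y0' * W') := by
      have hassoc : ((D * W) * Y0' * (W' * D')) * D = D * (W * (Y0' * (W' * (D' * D)))) := by
        simp only [mul_assoc]
      rw [hassoc, hD'D, mul_one, cD]
    rw [hDWY] at h2
    have h3 : D' * (Y0' * D) = Y0' := by
      rw [← mul_assoc]
      exact hD'YD
    rw [h3] at h2
    rw [mul_assoc]
    exact h2.symm
  have hDY0'c : D * Y0' = Y0' * D := by
    calc D * Y0' = D * Y0' * (D' * D) := by rw [hD'D, mul_one]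
      _ = (D * Y0' * D') * D := by simp only [mul_assoc]
      _ = Y0' * D := by rw [hDYD']
  have hWY0'c : W * Y0' = Y0' * W := by
    calc W * Y0' = W * Y0' * (W' * W) := by rw [hW'W, mul_one]
      _ = (W * Y0' * W') * W := by simp only [mul_assoc]
      _ = Y0' * W := by rw [hWY]
  have hHmP : Hm = P' * D * P := by
    have h1 : ((hd_gl : GL) : MM) = P * Hm * P' := by
      rw [hhd_def, Units.val_mul, Units.val_mul, hP_def, hP'_def, hHm_def]
    have h2 : D = P * Hm * P' := by rw [← hDval, h1]
    rw [h2]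
    refine Eq.symm ?_
    calc P' * (P * Hm * P') * P = (P' * P) * Hm * (P' * P) := by simp only [mul_assoc]
      _ = Hm := by rw [hP', one_mul, mul_one]
  have hUmP : Um = P' * W * P := by
    have h1 : W = P * Um * P' := by
      rw [hW_def, hw_def, Units.val_mul, Units.val_mul, hP_def, hP'_def, hUm_def]
    rw [h1]
    refine Eq.symm ?_
    calc P' * (P * Um * P') * P = (P' * P) * Um * (P' * P) := by simp only [mul_assoc]
      _ = Um := by rw [hP', one_mul, mul_one]
  have hY0P : Y0 = P' * Y0' * P := hY0Y0'.symm
  have hHmY0 : Hm * Y0 = Y0 * Hm := by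
    rw [hHmP, hY0P]
    rw [hmulP, hmulP, hDY0'c]
  have hUmY0 : Um * Y0 = Y0 * Um := by
    rw [hUmP, hY0P]
    rw [hmulP, hmulP, hWY0'c]
  -- commutation of the elliptic limit with Hm and Um
  have val_comm : ∀ a b : GL, Commute a b → (a : MM) * (b : MM) = (b : MM) * (a : MM) := by
    intro a b hab
    have h2 := congrArg (fun z : GL => ((z : GL) : MM)) hab.eq
    simp only [Units.val_mul] at h2
    exact h2
  have hE₀H : E₀ * Hm = Hm * E₀ := by
    have t1 : Tendsto (fun k => E ^ (m k) * Hm) atTop (nhds (E₀ * Hm)) := hEconv.mul_const Hm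
    have t2 : Tendsto (fun k => Hm * E ^ (m k)) atTop (nhds (Hm * E₀)) := hEconv.const_mul Hm
    have heq : (fun k => E ^ (m k) * Hm) = fun k => Hm * E ^ (m k) := by
      funext k
      have := val_comm (e ^ (m k)) h (ceh.pow_left (m k))
      simp only [Units.val_pow_eq_pow_val] at this
      exact this
    rw [heq] at t1
    exact tendsto_nhds_unique t1 t2
  have hE₀U : E₀ * Um = Um * E₀ := by
    have t1 : Tendsto (fun k => E ^ (m k) * Um) atTop (nhds (E₀ * Um)) := hEconv.mul_const Um
    have t2 : Tendsto (fun k => Um * E ^ (m k)) atTop (nhds (Um * E₀)) := hEconv.const_mul Um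
    have heq : (fun k => E ^ (m k) * Um) = fun k => Um * E ^ (m k) := by
      funext k
      have := val_comm (e ^ (m k)) u (ceu.pow_left (m k))
      simp only [Units.val_pow_eq_pow_val] at this
      exact this
    rw [heq] at t1
    exact tendsto_nhds_unique t1 t2
  have hE₀'H : E₀' * Hm = Hm * E₀' := by
    have t1 : Tendsto (fun k => E' ^ (m k) * Hm) atTop (nhds (E₀' * Hm)) := hE'conv.mul_const Hm
    have t2 : Tendsto (fun k => Hm * E' ^ (m k)) atTop (nhds (Hm * E₀')) := hE'conv.const_mul Hm
    have heq : (fun k => E' ^ (m k) * Hm) = fun k => Hm * E' ^ (m k) := by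
      funext k
      have := val_comm (e⁻¹ ^ (m k)) h ((ceh.inv_left).pow_left (m k))
      simp only [Units.val_pow_eq_pow_val] at this
      exact this
    rw [heq] at t1
    exact tendsto_nhds_unique t1 t2
  have hE₀'U : E₀' * Um = Um * E₀' := by
    have t1 : Tendsto (fun k => E' ^ (m k) * Um) atTop (nhds (E₀' * Um)) := hE'conv.mul_const Um
    have t2 : Tendsto (fun k => Um * E' ^ (m k)) atTop (nhds (Um * E₀')) := hE'conv.const_mul Um
    have heq : (fun k => E' ^ (m k) * Um) = fun k => Um * E' ^ (m k) := by
      funext k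
      have := val_comm (e⁻¹ ^ (m k)) u ((ceu.inv_left).pow_left (m k))
      simp only [Units.val_pow_eq_pow_val] at this
      exact this
    rw [heq] at t1
    exact tendsto_nhds_unique t1 t2
  have hXmY0 : Xm = E₀ * Y0 * E₀' := by
    rw [hY0_def]
    calc Xm = (E₀ * E₀') * Xm * (E₀ * E₀') := by rw [hE₀E₀', one_mul, mul_one]
      _ = E₀ * ((E₀' * Xm) * E₀) * E₀' := by simp only [mul_assoc]
      _ = E₀ * (E₀' * Xm * E₀) * E₀' := by simp only [mul_assoc]
  have comm_final : ∀ T : MM, E₀ * T = T * E₀ → E₀' * T = T * E₀' → Y0 * T = T * Y0 →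
      Xm * T = T * Xm := by
    intro T h1 h2 h3
    rw [hXmY0]
    calc E₀ * Y0 * E₀' * T = E₀ * (Y0 * (E₀' * T)) := by simp only [mul_assoc]
      _ = E₀ * (Y0 * (T * E₀')) := by rw [h2]
      _ = E₀ * ((Y0 * T) * E₀') := by simp only [mul_assoc]
      _ = E₀ * ((T * Y0) * E₀') := by rw [h3]
      _ = (E₀ * T) * (Y0 * E₀') := by simp only [mul_assoc]
      _ = (T * E₀) * (Y0 * E₀') := by rw [h1]
      _ = T * (E₀ * Y0 * E₀') := by simp only [mul_assoc]
  constructor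
  · show (x : GL) * h = h * (x : GL)
    apply Units.ext
    rw [Units.val_mul, Units.val_mul]
    exact comm_final Hm hE₀H hE₀'H hHmY0.symm
  · show (x : GL) * u = u * (x : GL)
    apply Units.ext
    rw [Units.val_mul, Units.val_mul]
    exact comm_final Um hE₀U hE₀'U hUmY0.symm




theorem aux_superset
    (S : Subgroup GL) (g e h u : GL) (hg : g ∈ S)
    (p₁ : GL) (hp₁ : ((p₁ * e * p₁⁻¹ : GL) : MM) ∈ Matrix.orthogonalGroup (Fin d) ℝ)
    (hdecomp : g = e * h * u)
    (ceh : Commute e h) (ceu : Commute e u) (chu : Commute h u)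
    (x : ↥S) (hch : Commute (x : GL) h) (hcu : Commute (x : GL) u) :
    x ∈ recurrentSet (fun y : ↥S => (⟨g, hg⟩ : ↥S) * y * (⟨g, hg⟩ : ↥S)⁻¹) := by
  haveI : FirstCountableTopology MM :=
    inferInstanceAs (FirstCountableTopology (Fin d → Fin d → ℝ))
  set Xm : MM := ((x : GL) : MM) with hXm_def
  set Q1 : MM := ((p₁ : GL) : MM) with hQ1_def
  set Q1' : MM := ((p₁⁻¹ : GL) : MM) with hQ1'_def
  have hQ : Q1 * Q1' = 1 := by rw [hQ1_def, hQ1'_def, ← Units.val_mul, mul_inv_cancel, Units.val_one]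
  have hQ' : Q1' * Q1 = 1 := by rw [hQ1_def, hQ1'_def, ← Units.val_mul, inv_mul_cancel, Units.val_one]
  set O_gl : GL := p₁ * e * p₁⁻¹ with hOgl_def
  set O : MM := ((O_gl : GL) : MM) with hO_def
  have hOmem : O ∈ Matrix.orthogonalGroup (Fin d) ℝ := hp₁
  set E : MM := ((e : GL) : MM) with hE_def
  set E' : MM := ((e⁻¹ : GL) : MM) with hE'_def
  have hQEQ : Q1 * E * Q1' = O := by
    rw [hO_def, hOgl_def, Units.val_mul, Units.val_mul, hQ1_def, hQ1'_def, hE_def]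
  have hEO : E = Q1' * O * Q1 := by
    rw [← hQEQ]
    refine Eq.symm ?_
    calc Q1' * (Q1 * E * Q1') * Q1 = Q1' * Q1 * E * (Q1' * Q1) := by
          simp only [mul_assoc]
      _ = E := by rw [hQ', one_mul, mul_one]
  have hstarO : star O = ((O_gl⁻¹ : GL) : MM) := (val_inv_eq_star hOmem).symm
  have hE'O : E' = Q1' * star O * Q1 := by
    rw [hstarO, hE'_def]
    have : e⁻¹ = p₁⁻¹ * O_gl⁻¹ * p₁ := by rw [hOgl_def]; group
    rw [this, Units.val_mul, Units.val_mul, hQ1_def, hQ1'_def]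
  have hEpow : ∀ k : ℕ, E ^ k = Q1' * O ^ k * Q1 := fun k => by
    rw [hEO, my_conj_pow hQ' hQ]
  have hE'pow : ∀ k : ℕ, E' ^ k = Q1' * star (O ^ k) * Q1 := fun k => by
    have hOk : (O ^ k) = ((O_gl ^ k : GL) : MM) := by rw [Units.val_pow_eq_pow_val]
    have hOkmem : ((O_gl ^ k : GL) : MM) ∈ Matrix.orthogonalGroup (Fin d) ℝ := by
      rw [← hOk]; exact pow_mem hOmem k
    have hs : star (O ^ k) = (((O_gl ^ k)⁻¹ : GL) : MM) := by
      rw [hOk, val_inv_eq_star hOkmem]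
    rw [hE'O, my_conj_pow hQ' hQ, hs]
    congr 2
    rw [hstarO, ← Units.val_pow_eq_pow_val, ← inv_pow]
  -- subsequence extraction on powers of O
  obtain ⟨O₀, hO₀mem, ψ, hψ, hOconv⟩ :=
    orth_isCompact.tendsto_subseq (x := fun k => O ^ k) (fun k => pow_mem hOmem k)
  have hO₀s : star O₀ * O₀ = 1 := (Matrix.mem_orthogonalGroup_iff' (Fin d) ℝ).mp hO₀mem
  set m : ℕ → ℕ := fun j => ψ (2 ^ (j + 1)) - ψ (2 ^ j) with hm_def
  have h2pow : ∀ j : ℕ, 2 ^ (j + 1) = 2 ^ j + 2 ^ j := fun j => by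
    rw [pow_succ, Nat.mul_two]
  have hmge : ∀ j, 2 ^ j ≤ m j := by
    intro j
    have h1 := strictMono_gap hψ (2 ^ j) (2 ^ j)
    rw [← h2pow j] at h1
    show 2 ^ j ≤ ψ (2 ^ (j + 1)) - ψ (2 ^ j)
    omega
  have htm : Tendsto m atTop atTop := by
    refine tendsto_atTop_mono (fun j => ?_) tendsto_id
    calc id j = j := rfl
      _ ≤ 2 ^ j := Nat.le_of_lt (Nat.lt_two_pow_self)
      _ ≤ m j := hmge j
  have hsum : ∀ j, ψ (2 ^ j) + m j = ψ (2 ^ (j + 1)) := by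
    intro j
    have h1 : ψ (2 ^ j) ≤ ψ (2 ^ (j + 1)) :=
      hψ.monotone (Nat.pow_le_pow_right (by norm_num) (by omega))
    show ψ (2 ^ j) + (ψ (2 ^ (j + 1)) - ψ (2 ^ j)) = ψ (2 ^ (j + 1))
    omega
  have h2powT : Tendsto (fun j : ℕ => 2 ^ j) atTop atTop := by
    refine tendsto_atTop_mono (fun j => ?_) tendsto_id
    exact Nat.le_of_lt (Nat.lt_two_pow_self)
  have h2powT' : Tendsto (fun j : ℕ => 2 ^ (j + 1)) atTop atTop :=
    h2powT.comp (tendsto_add_atTop_nat 1)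
  have hA1 : Tendsto (fun j => O ^ (ψ (2 ^ j))) atTop (nhds O₀) :=
    hOconv.comp h2powT
  have hA2 : Tendsto (fun j => O ^ (ψ (2 ^ (j + 1)))) atTop (nhds O₀) :=
    hOconv.comp h2powT'
  have hstar_cont : Continuous (fun Mt : MM => star Mt) := by
    have : Continuous fun Mt : MM => Mt.conjTranspose := continuous_id.matrix_conjTranspose
    exact this
  have hOmj : Tendsto (fun j => O ^ (m j)) atTop (nhds 1) := by
    have hkey : ∀ j, O ^ (m j) = star (O ^ (ψ (2 ^ j))) * O ^ (ψ (2 ^ (j + 1))) := by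
      intro j
      have h1 : O ^ (ψ (2 ^ j)) * O ^ (m j) = O ^ (ψ (2 ^ (j + 1))) := by
        rw [← pow_add, hsum j]
      have h2 : star (O ^ (ψ (2 ^ j))) * O ^ (ψ (2 ^ j)) = 1 :=
        (Matrix.mem_orthogonalGroup_iff' (Fin d) ℝ).mp (pow_mem hOmem _)
      rw [← h1, ← mul_assoc, h2, one_mul]
    simp only [hkey]
    have := ((hstar_cont.tendsto O₀).comp hA1).mul hA2
    rw [hO₀s] at this
    exact this
  have hEmj : Tendsto (fun j => E ^ (m j)) atTop (nhds 1) := by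
    simp only [hEpow]
    have := ((hOmj.const_mul Q1').mul_const Q1)
    rw [mul_one, hQ'] at this
    exact this
  have hE'mj : Tendsto (fun j => E' ^ (m j)) atTop (nhds 1) := by
    simp only [hE'pow]
    have h1 : Tendsto (fun j => star (O ^ (m j))) atTop (nhds (star (1 : MM))) :=
      (hstar_cont.tendsto 1).comp hOmj
    rw [star_one] at h1
    have := ((h1.const_mul Q1').mul_const Q1)
    rw [mul_one, hQ'] at this
    exact this
  -- group identities
  have hcE_A : Commute e (h * u) := ceh.mul_right ceu
  have hgpow : ∀ k : ℕ, g ^ k = e ^ k * (h * u) ^ k := fun k => by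
    rw [hdecomp, mul_assoc, hcE_A.mul_pow]
  have hgx : ∀ (y : GL), Commute y h → Commute y u →
      ∀ k : ℕ, g ^ k * y * (g ^ k)⁻¹ = e ^ k * y * (e ^ k)⁻¹ := by
    intro y hyh hyu k
    have hc2 : Commute y ((h * u) ^ k) := (hyh.mul_right hyu).pow_right k
    rw [hgpow k, _root_.mul_inv_rev]
    calc e ^ k * (h * u) ^ k * y * (((h * u) ^ k)⁻¹ * (e ^ k)⁻¹)
        = e ^ k * ((h * u) ^ k * y * ((h * u) ^ k)⁻¹) * (e ^ k)⁻¹ := by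
          simp only [mul_assoc]
      _ = e ^ k * y * (e ^ k)⁻¹ := by
          rw [← hc2.eq, mul_inv_cancel_right]
  -- the iterates at the subtype level
  set f : ↥S → ↥S := fun y => (⟨g, hg⟩ : ↥S) * y * (⟨g, hg⟩ : ↥S)⁻¹ with hf_def
  have hval_iter : ∀ k : ℕ, ((f^[k] x : ↥S) : GL) = g ^ k * (x : GL) * (g ^ k)⁻¹ := by
    intro k
    rw [hf_def, conj_iterate]
    push_cast
    try rfl
  refine ⟨m, htm, ?_⟩
  apply tendsto_sub_of_tendsto_mat (l := x)
  · have hkey : ∀ j : ℕ, (((f^[m j] x : ↥S) : GL) : MM) = E ^ (m j) * Xm * E' ^ (m j) := by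
      intro j
      rw [hval_iter, hgx (x : GL) hch hcu]
      rw [show (e ^ (m j))⁻¹ = (e⁻¹) ^ (m j) from (inv_pow e (m j)).symm]
      rw [Units.val_mul, Units.val_mul]
      simp only [Units.val_pow_eq_pow_val]
      try rw [← hE_def, ← hE'_def, ← hXm_def]
    simp only [hkey]
    have := (hEmj.mul_const Xm).mul hE'mj
    rw [one_mul, mul_one] at this
    exact this
  · have hkey : ∀ j : ℕ, ((((f^[m j] x)⁻¹ : ↥S) : GL) : MM)
        = E ^ (m j) * ((((x⁻¹ : ↥S) : GL)) : MM) * E' ^ (m j) := by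
      intro j
      have h1 : (((f^[m j] x)⁻¹ : ↥S) : GL) = ((f^[m j] x : ↥S) : GL)⁻¹ := by
        push_cast
        rfl
      rw [h1, hval_iter]
      have h2 : (g ^ (m j) * (x : GL) * (g ^ (m j))⁻¹)⁻¹
          = g ^ (m j) * ((x : GL))⁻¹ * (g ^ (m j))⁻¹ := by
        group
      rw [h2]
      have h3 : ((x⁻¹ : ↥S) : GL) = ((x : ↥S) : GL)⁻¹ := by push_cast; rfl
      rw [hgx ((x : GL))⁻¹ hch.inv_left hcu.inv_left]
      rw [show (e ^ (m j))⁻¹ = (e⁻¹) ^ (m j) from (inv_pow e (m j)).symm]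
      rw [Units.val_mul, Units.val_mul]
      simp only [Units.val_pow_eq_pow_val]
      try rw [← hE_def, ← hE'_def, h3]
    simp only [hkey]
    have := (hEmj.mul_const ((((x⁻¹ : ↥S) : GL)) : MM)).mul hE'mj
    rw [one_mul, mul_one] at this
    exact this


lemma conj_g_eq {G : Type*} [Group G] {g e h u : G} (hdecomp : g = e * h * u)
    {y : G} (hyh : Commute y h) (hyu : Commute y u) :
    g * y * g⁻¹ = e * y * e⁻¹ := by
  have hc : Commute y (h * u) := hyh.mul_right hyu
  rw [hdecomp, mul_assoc e h u]
  rw [_root_.mul_inv_rev]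
  calc e * (h * u) * y * ((h * u)⁻¹ * e⁻¹)
      = e * ((h * u) * y * (h * u)⁻¹) * e⁻¹ := by simp only [mul_assoc]
    _ = e * y * e⁻¹ := by rw [← hc.eq, mul_inv_cancel_right]

theorem aux_metric
    (S : Subgroup GL) (g e h u : GL) (hg : g ∈ S)
    (p₁ : GL) (hp₁ : ((p₁ * e * p₁⁻¹ : GL) : MM) ∈ Matrix.orthogonalGroup (Fin d) ℝ)
    (hdecomp : g = e * h * u)
    (R : Set ↥S)
    (hRcomm : ∀ z : ↥S, z ∈ R → Commute (z : GL) h ∧ Commute (z : GL) u) :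
    ∃ m : MetricSpace ↥R,
      m.toUniformSpace.toTopologicalSpace = instTopologicalSpaceSubtype ∧
      ∀ (x y : ↥R)
        (hx : (⟨g, hg⟩ : ↥S) * (x : ↥S) * (⟨g, hg⟩ : ↥S)⁻¹ ∈ R)
        (hy : (⟨g, hg⟩ : ↥S) * (y : ↥S) * (⟨g, hg⟩ : ↥S)⁻¹ ∈ R),
        m.dist ⟨(⟨g, hg⟩ : ↥S) * (x : ↥S) * (⟨g, hg⟩ : ↥S)⁻¹, hx⟩
               ⟨(⟨g, hg⟩ : ↥S) * (y : ↥S) * (⟨g, hg⟩ : ↥S)⁻¹, hy⟩ = m.dist x y := by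
  classical
  set Q1 : MM := ((p₁ : GL) : MM) with hQ1_def
  set Q1' : MM := ((p₁⁻¹ : GL) : MM) with hQ1'_def
  have hQ : Q1 * Q1' = 1 := by rw [hQ1_def, hQ1'_def, ← Units.val_mul, mul_inv_cancel, Units.val_one]
  have hQ' : Q1' * Q1 = 1 := by rw [hQ1_def, hQ1'_def, ← Units.val_mul, inv_mul_cancel, Units.val_one]
  set O_gl : GL := p₁ * e * p₁⁻¹ with hOgl_def
  set O : MM := ((O_gl : GL) : MM) with hO_def
  have hOmem : O ∈ Matrix.orthogonalGroup (Fin d) ℝ := hp₁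
  have hstarO : star O = ((O_gl⁻¹ : GL) : MM) := (val_inv_eq_star hOmem).symm
  set E : MM := ((e : GL) : MM) with hE_def
  set E' : MM := ((e⁻¹ : GL) : MM) with hE'_def
  -- the embedding into Euclidean space
  set XM : ↥R → MM := fun z => (((z : ↥S) : GL) : MM) with hXM_def
  set Fm : ↥R → MM := fun z => Q1 * XM z * Q1' with hFm_def
  set Φ : ↥R → EuclideanSpace ℝ (Fin d × Fin d) :=
    fun z => (WithLp.equiv 2 _).symm (fun pq => Fm z pq.1 pq.2) with hΦ_def
  have hΦapp : ∀ (z : ↥R) (pq : Fin d × Fin d), Φ z pq = Fm z pq.1 pq.2 := by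
    intro z pq
    rfl
  have hXMinj : Function.Injective XM := by
    intro z w hzw
    apply Subtype.ext
    apply Subtype.ext
    apply Units.ext
    exact hzw
  have hΦinj : Function.Injective Φ := by
    intro z w hzw
    have h1 : Fm z = Fm w := by
      ext i j
      have h0 : Φ z (i, j) = Φ w (i, j) := by rw [hzw]
      rw [hΦapp, hΦapp] at h0
      exact h0
    have h2 : XM z = XM w := by
      have h3 : Q1' * (Q1 * XM z * Q1') * Q1 = Q1' * (Q1 * XM w * Q1') * Q1 := by
        rw [show Q1 * XM z * Q1' = Fm z from rfl, show Q1 * XM w * Q1' = Fm w from rfl, h1]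
      have h4 : ∀ T : MM, Q1' * (Q1 * T * Q1') * Q1 = T := by
        intro T
        calc Q1' * (Q1 * T * Q1') * Q1 = (Q1' * Q1) * T * (Q1' * Q1) := by
              simp only [mul_assoc]
          _ = T := by rw [hQ', one_mul, mul_one]
      rw [h4, h4] at h3
      exact h3
    exact hXMinj h2
  refine ⟨MetricSpace.induced Φ hΦinj (by infer_instance), ?_, ?_⟩
  · -- topology compatibility
    rw [UniformSpace.toTopologicalSpace_comap]
    refine le_antisymm ?_ ?_
    · -- induced Φ ≤ subtype
      letI tR : TopologicalSpace ↥R := TopologicalSpace.induced Φ inferInstance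
      have hΦc : Continuous Φ := continuous_induced_dom
      have hmat : Continuous fun fn : EuclideanSpace ℝ (Fin d × Fin d) =>
          (Matrix.of fun i j => (WithLp.equiv 2 _) fn (i, j) : MM) := by
        apply continuous_matrix
        intro i j
        exact ((continuous_apply (i, j)).comp (PiLp.continuous_ofLp 2 _))
      have hXMc : Continuous XM := by
        have hid : ∀ z : ↥R,
            Q1' * (Matrix.of fun i j => (WithLp.equiv 2 _) (Φ z) (i, j) : MM) * Q1 = XM z := by
          intro z
          have h1 : (Matrix.of fun i j => (WithLp.equiv 2 _) (Φ z) (i, j) : MM) = Fm z := by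
            ext i j
            simp only [Matrix.of_apply]
            have h2 : (WithLp.equiv 2 _) (Φ z) (i, j) = Φ z (i, j) := rfl
            rw [h2, hΦapp]
          rw [h1, hFm_def]
          calc Q1' * (Q1 * XM z * Q1') * Q1 = (Q1' * Q1) * XM z * (Q1' * Q1) := by
                simp only [mul_assoc]
            _ = XM z := by rw [hQ', one_mul, mul_one]
        have hc : Continuous
            (fun z : ↥R => Q1' * (Matrix.of fun i j => (WithLp.equiv 2 _) (Φ z) (i, j) : MM) * Q1) :=
          (continuous_const.matrix_mul (hmat.comp hΦc)).matrix_mul continuous_const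
        have heq : (fun z : ↥R =>
            Q1' * (Matrix.of fun i j => (WithLp.equiv 2 _) (Φ z) (i, j) : MM) * Q1) = XM :=
          funext hid
        rw [heq] at hc
        exact hc
      have hXMinvc : Continuous (fun z : ↥R => (XM z)⁻¹) := by
        rw [continuous_iff_continuousAt]
        intro z
        have hdet : ((XM z).det) ≠ 0 := by
          have h1 : IsUnit (XM z) := (((z : ↥S) : GL)).isUnit
          have h2 : IsUnit (XM z).det := (Matrix.isUnit_iff_isUnit_det _).mp h1
          exact h2.ne_zero
        have hinv : ContinuousAt Inv.inv (XM z) := by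
          apply continuousAt_matrix_inv
          have h3 : ContinuousAt (fun t : ℝ => Ring.inverse t) ((XM z).det) := by
            rw [Ring.inverse_eq_inv']
            exact continuousAt_inv₀ hdet
          exact h3
        exact hinv.comp hXMc.continuousAt
      have hval : Continuous (fun z : ↥R => ((z : ↥S) : GL)) := by
        apply continuous_induced_rng.mpr
        have hpair : Continuous
            (fun z : ↥R => ((XM z, MulOpposite.op ((XM z)⁻¹)) : MM × MMᵐᵒᵖ)) :=
          hXMc.prodMk (MulOpposite.continuous_op.comp hXMinvc)
        have heq : (fun z : ↥R => Units.embedProduct MM ((z : ↥S) : GL))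
            = fun z : ↥R => ((XM z, MulOpposite.op ((XM z)⁻¹)) : MM × MMᵐᵒᵖ) := by
          funext z
          simp only [Units.embedProduct_apply]
          refine Prod.ext rfl ?_
          simp only
          congr 1
          exact (Matrix.coe_units_inv _)
        show Continuous (fun z : ↥R => Units.embedProduct MM ((z : ↥S) : GL))
        rw [heq]
        exact hpair
      have hvalS : Continuous (fun z : ↥R => (z : ↥S)) := by
        apply continuous_induced_rng.mpr
        exact hval
      exact continuous_iff_le_induced.mp hvalS
    · -- subtype ≤ induced Φ
      have hΦcont : Continuous Φ := by
        have hXMcont : Continuous XM :=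
          Units.continuous_val.comp (continuous_subtype_val.comp continuous_subtype_val)
        have hFmcont : Continuous Fm := (continuous_const.matrix_mul hXMcont).matrix_mul continuous_const
        rw [hΦ_def]
        refine (PiLp.continuous_toLp 2 _).comp ?_
        apply continuous_pi
        intro pq
        exact hFmcont.matrix_elem pq.1 pq.2
      exact continuous_iff_le_induced.mp hΦcont
  · -- the isometry property
    intro x y hx hy
    show dist (Φ ⟨(⟨g, hg⟩ : ↥S) * (x : ↥S) * (⟨g, hg⟩ : ↥S)⁻¹, hx⟩)
        (Φ ⟨(⟨g, hg⟩ : ↥S) * (y : ↥S) * (⟨g, hg⟩ : ↥S)⁻¹, hy⟩) = dist (Φ x) (Φ y)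
    have hFmconj : ∀ (z : ↥R) (hz : (⟨g, hg⟩ : ↥S) * (z : ↥S) * (⟨g, hg⟩ : ↥S)⁻¹ ∈ R),
        Fm ⟨(⟨g, hg⟩ : ↥S) * (z : ↥S) * (⟨g, hg⟩ : ↥S)⁻¹, hz⟩ = O * Fm z * star O := by
      intro z hz
      have hcz := hRcomm (z : ↥S) z.2
      have h1 : (((⟨g, hg⟩ : ↥S) * (z : ↥S) * (⟨g, hg⟩ : ↥S)⁻¹ : ↥S) : GL)
          = g * ((z : ↥S) : GL) * g⁻¹ := by push_cast; rfl
      have h2 : g * ((z : ↥S) : GL) * g⁻¹ = e * ((z : ↥S) : GL) * e⁻¹ :=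
        conj_g_eq hdecomp hcz.1 hcz.2
      have h3 : XM ⟨(⟨g, hg⟩ : ↥S) * (z : ↥S) * (⟨g, hg⟩ : ↥S)⁻¹, hz⟩ = E * XM z * E' := by
        rw [hXM_def]
        simp only
        rw [h1, h2, Units.val_mul, Units.val_mul]
      have hOQ : Q1 * E * Q1' = O := by
        rw [hO_def, hOgl_def, Units.val_mul, Units.val_mul, hQ1_def, hQ1'_def, hE_def]
      have hOQ' : Q1 * E' * Q1' = star O := by
        rw [hstarO]
        have h5 : e⁻¹ = p₁⁻¹ * O_gl⁻¹ * p₁ := by rw [hOgl_def]; group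
        rw [hE'_def, h5, Units.val_mul, Units.val_mul, hQ1_def, hQ1'_def]
        calc ((p₁ : GL) : MM) * (((p₁⁻¹ : GL) : MM) * ((O_gl⁻¹ : GL) : MM) * ((p₁ : GL) : MM)) * ((p₁⁻¹ : GL) : MM)
            = (((p₁ : GL) : MM) * ((p₁⁻¹ : GL) : MM)) * ((O_gl⁻¹ : GL) : MM) *
              (((p₁ : GL) : MM) * ((p₁⁻¹ : GL) : MM)) := by simp only [mul_assoc]
          _ = ((O_gl⁻¹ : GL) : MM) := by rw [← hQ1_def, ← hQ1'_def, hQ, one_mul, mul_one]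
      rw [hFm_def]
      simp only
      rw [h3]
      calc Q1 * (E * XM z * E') * Q1'
          = (Q1 * E * Q1') * (Q1 * XM z * Q1') * (Q1 * E' * Q1') := by
            have c1 : ∀ T : MM, Q1' * (Q1 * T) = T := fun T => by
              rw [← mul_assoc, hQ', one_mul]
            calc Q1 * (E * XM z * E') * Q1'
                = Q1 * (E * (Q1' * (Q1 * (XM z * (Q1' * (Q1 * (E' * Q1'))))))) := by
                  rw [c1, c1]
                  simp only [mul_assoc]
              _ = (Q1 * E * Q1') * (Q1 * XM z * Q1') * (Q1 * E' * Q1') := by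
                  simp only [mul_assoc]
        _ = O * (Q1 * XM z * Q1') * star O := by rw [hOQ, hOQ']
    rw [EuclideanSpace.dist_eq, EuclideanSpace.dist_eq]
    congr 1
    have hsum : ∀ a b : ↥R, ∑ pq : Fin d × Fin d, dist (Φ a pq) (Φ b pq) ^ 2
        = ∑ j, ∑ i, ((Fm a - Fm b) i j) ^ 2 := by
      intro a b
      rw [Fintype.sum_prod_type]
      rw [Finset.sum_comm]
      refine Finset.sum_congr rfl fun j _ => Finset.sum_congr rfl fun i _ => ?_
      rw [hΦapp, hΦapp, Real.dist_eq, sq_abs, Matrix.sub_apply]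
    rw [hsum, hsum]
    rw [hFmconj x hx, hFmconj y hy]
    have hdiff : O * Fm x * star O - O * Fm y * star O = O * (Fm x - Fm y) * star O := by
      rw [Matrix.mul_sub, Matrix.sub_mul]
    rw [hdiff]
    exact sq_sum_conj_orth hOmem _


end MatrixHelpers
end Helpers

/-- **The recurrent set of a conjugation of a connected linear semi-simple Lie group**
(Caldas–Patrão, Lemma 4.2). Let `G ≤ GL(d, ℝ)` be a connected closed subgroup whose Lie
algebra `L = {X : ∀ t, exp(tX) ∈ G}` is semi-simple, and let `g ∈ G` have multiplicative
Jordan decomposition `g = e h u` with `e` elliptic, `h` hyperbolic, `u` unipotent,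
pairwise commuting. Then the recurrent set of the conjugation `C_g : G → G` is
`G_h ∩ G_u`, the intersection of the centralizers of `h` and `u` in `G`; moreover `C_g`
restricted to its recurrent set is an isometry for some distance compatible with the
topology. -/
theorem recurrentSet_conj_linear_semisimple
    {d : ℕ} (S : Subgroup (Matrix.GeneralLinearGroup (Fin d) ℝ))
    (hclosed : IsClosed (S : Set (Matrix.GeneralLinearGroup (Fin d) ℝ)))
    (hconn : IsConnected (S : Set (Matrix.GeneralLinearGroup (Fin d) ℝ)))
    (L : LieSubalgebra ℝ (Matrix (Fin d) (Fin d) ℝ))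
    (hL : ∀ x : Matrix (Fin d) (Fin d) ℝ,
      x ∈ L ↔ ∀ t : ℝ, ∃ y ∈ S,
        (y : Matrix (Fin d) (Fin d) ℝ) = NormedSpace.exp (t • x))
    (hss : LieAlgebra.IsSemisimple ℝ ↥L)
    (g e h u : Matrix.GeneralLinearGroup (Fin d) ℝ) (hg : g ∈ S)
    (he : IsElliptic e) (hh : IsHyperbolic h) (hu : IsUnipotentGL u)
    (hdecomp : g = e * h * u)
    (ceh : Commute e h) (ceu : Commute e u) (chu : Commute h u) :
    recurrentSet (fun x : ↥S => (⟨g, hg⟩ : ↥S) * x * (⟨g, hg⟩ : ↥S)⁻¹) =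
      {x : ↥S | Commute (x : Matrix.GeneralLinearGroup (Fin d) ℝ) h ∧
        Commute (x : Matrix.GeneralLinearGroup (Fin d) ℝ) u} ∧
    ∃ m : MetricSpace
        ↥(recurrentSet (fun x : ↥S => (⟨g, hg⟩ : ↥S) * x * (⟨g, hg⟩ : ↥S)⁻¹)),
      m.toUniformSpace.toTopologicalSpace = instTopologicalSpaceSubtype ∧
      ∀ (x y : ↥(recurrentSet (fun x : ↥S => (⟨g, hg⟩ : ↥S) * x * (⟨g, hg⟩ : ↥S)⁻¹)))
        (hx : (⟨g, hg⟩ : ↥S) * (x : ↥S) * (⟨g, hg⟩ : ↥S)⁻¹ ∈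
          recurrentSet (fun x : ↥S => (⟨g, hg⟩ : ↥S) * x * (⟨g, hg⟩ : ↥S)⁻¹))
        (hy : (⟨g, hg⟩ : ↥S) * (y : ↥S) * (⟨g, hg⟩ : ↥S)⁻¹ ∈
          recurrentSet (fun x : ↥S => (⟨g, hg⟩ : ↥S) * x * (⟨g, hg⟩ : ↥S)⁻¹)),
        m.dist ⟨(⟨g, hg⟩ : ↥S) * (x : ↥S) * (⟨g, hg⟩ : ↥S)⁻¹, hx⟩
               ⟨(⟨g, hg⟩ : ↥S) * (y : ↥S) * (⟨g, hg⟩ : ↥S)⁻¹, hy⟩ = m.dist x y  := by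
  obtain ⟨p₁, hp₁⟩ := he
  obtain ⟨p₂, v, hv, hp₂⟩ := hh
  have hmain : recurrentSet (fun x : ↥S => (⟨g, hg⟩ : ↥S) * x * (⟨g, hg⟩ : ↥S)⁻¹) =
      {x : ↥S | Commute (x : Matrix.GeneralLinearGroup (Fin d) ℝ) h ∧
        Commute (x : Matrix.GeneralLinearGroup (Fin d) ℝ) u} := by
    ext x
    constructor
    · intro hx
      exact aux_subset S g e h u hg p₁ hp₁ p₂ v hv hp₂ hu hdecomp ceh ceu chu x hx
    · rintro ⟨h1, h2⟩
      exact aux_superset S g e h u hg p₁ hp₁ hdecomp ceh ceu chu x h1 h2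
  refine ⟨hmain, ?_⟩
  have hRcomm : ∀ z : ↥S,
      z ∈ recurrentSet (fun x : ↥S => (⟨g, hg⟩ : ↥S) * x * (⟨g, hg⟩ : ↥S)⁻¹) →
      Commute (z : Matrix.GeneralLinearGroup (Fin d) ℝ) h ∧
        Commute (z : Matrix.GeneralLinearGroup (Fin d) ℝ) u := by
    intro z hz
    rw [hmain] at hz
    exact hz
  exact aux_metric S g e h u hg p₁ hp₁ hdecomp
    (recurrentSet (fun x : ↥S => (⟨g, hg⟩ : ↥S) * x * (⟨g, hg⟩ : ↥S)⁻¹)) hRcomm
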